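/- Let h > 0 and n ≥ 1. Define the lower-triangular n×n matrices (1-based indices): L[k,j] = h^{j-k} binom(k-1, j-1) n!/(n-k+j)! for j ≤ k (0 otherwise), and M[j,i] = (-1)^{j-i} h^{i-j} · (j-1)!/(i-1)! · binom(n+j-i-1, j-i) for j ≥ i (0 otherwise). Then L · M = I, i.e., M = L^{-1}. -/

import Mathlib

open Finset fwdDiff in
lemma L_inverse_key (d a : ℕ) (hd : 1 ≤ d) :
    ∑ m ∈ Finset.range (d + 1), (-1 : ℤ) ^ m * d.choose m * (a + m).choose (d - 1) = 0 := by
  have hiter : (fwdDiff (1:ℕ))^[d] (fun x : ℕ => ((x.choose (d - 1) : ℤ))) = fun _ => 0 := by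
    obtain ⟨e, rfl⟩ : ∃ e, d = e + 1 := ⟨d - 1, by omega⟩
    simp only [Nat.add_sub_cancel]
    have h1 : (fwdDiff (1:ℕ))^[e] (fun x : ℕ => ((x.choose (e + 0) : ℤ))) = fun x => (x.choose 0 : ℤ) :=
      fwdDiff_iter_choose 0 e
    simp only [Nat.add_zero, Nat.choose_zero_right, Nat.cast_one] at h1
    ext y
    rw [Function.iterate_succ_apply', h1]
    simp [fwdDiff]
  have h0 := fwdDiff_iter_eq_sum_shift (1 : ℕ) (fun x : ℕ => ((x.choose (d - 1) : ℤ))) d a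
  rw [hiter] at h0
  simp only [smul_eq_mul, smul_eq_mul, mul_one] at h0
  have h2 : ∑ m ∈ Finset.range (d + 1), (-1 : ℤ) ^ m * d.choose m * (a + m).choose (d - 1)
      = (-1 : ℤ) ^ d * ∑ k ∈ Finset.range (d + 1),
          (-1 : ℤ) ^ (d - k) * (d.choose k) * ((a + k).choose (d - 1)) := by
    rw [Finset.mul_sum]
    refine Finset.sum_congr rfl fun m hm => ?_
    have hmd : m ≤ d := by simpa [Nat.lt_succ_iff] using hm
    have hpow : (-1 : ℤ) ^ (d - m) * (-1 : ℤ) ^ m = (-1 : ℤ) ^ d := by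
      rw [← pow_add]; congr 1; omega
    have hsq : (-1 : ℤ) ^ (d - m) * (-1 : ℤ) ^ (d - m) = 1 := by
      rw [← pow_add, ← two_mul, pow_mul]; norm_num
    have : (-1 : ℤ) ^ d * (-1 : ℤ) ^ (d - m) = (-1 : ℤ) ^ m := by
      calc (-1 : ℤ) ^ d * (-1) ^ (d - m) = ((-1) ^ (d - m) * (-1) ^ m) * (-1) ^ (d - m) := by
            rw [hpow]
        _ = ((-1 : ℤ) ^ (d - m) * (-1) ^ (d - m)) * (-1) ^ m := by ring
        _ = (-1 : ℤ) ^ m := by rw [hsq, one_mul]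
    rw [← mul_assoc, ← mul_assoc, this]
  rw [h2]
  have h3 : ∑ k ∈ Finset.range (d + 1),
      (-1 : ℤ) ^ (d - k) * (d.choose k) * ((a + k).choose (d - 1)) = 0 := by
    rw [← h0]
  rw [h3, mul_zero]


open Finset in
lemma L_inverse_aux (n : ℕ) (hn : 1 ≤ n) (h : ℝ) (hh : 0 < h) (K I : ℕ) (hK : K < n) :
    ∑ j ∈ Finset.range n,
      ((if j ≤ K then
          h ^ ((j : ℤ) - (K : ℤ)) * (K.choose j : ℝ) *
            (n.factorial : ℝ) / ((n - K + j).factorial : ℝ)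
        else 0) *
       (if I ≤ j then
          (-1 : ℝ) ^ (j - I) * h ^ ((I : ℤ) - (j : ℤ)) *
            ((j.factorial : ℝ) / (I.factorial : ℝ)) *
            ((n + (j - I) - 1).choose (j - I) : ℝ)
        else 0)) = if K = I then 1 else 0 := by
  have hhne : h ≠ 0 := ne_of_gt hh
  by_cases hKI : K < I
  · rw [if_neg (by omega)]
    refine Finset.sum_eq_zero fun j _ => ?_
    rcases le_or_gt j K with hjk | hjk
    · rw [if_neg (by omega : ¬ I ≤ j), mul_zero]
    · rw [if_neg (by omega : ¬ j ≤ K), zero_mul]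
  · push_neg at hKI
    have hstep1 : ∀ f : ℕ → ℝ, (∀ x, (¬ x ≤ K ∨ ¬ I ≤ x) → f x = 0) →
        ∑ j ∈ Finset.range n, f j = ∑ j ∈ Finset.Ico I (K + 1), f j := by
      intro f hf
      refine (Finset.sum_subset (fun x hx => ?_) (fun x hx hnx => ?_)).symm
      · simp only [mem_Ico, mem_range] at hx ⊢; omega
      · simp only [mem_Ico, not_and_or, not_le, not_lt] at hnx
        exact hf x (by omega)
    rw [hstep1 _ (fun x hx => ?_), Finset.sum_Ico_eq_sum_range,
      show K + 1 - I = (K - I) + 1 from by omega]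
    swap
    · rcases hx with h1 | h1
      · rw [if_neg h1, zero_mul]
      · rw [if_neg h1, mul_zero]
    set d := K - I with hd
    have hKId : K = I + d := by omega
    by_cases hd0 : d = 0
    · rw [hd0, if_pos (by omega)]
      rw [Finset.sum_range_one]
      have hIK : I = K := by omega
      subst hIK
      rw [if_pos (by omega), if_pos (by omega)]
      have h1 : n - I + (I + 0) = n := by omega
      have h2 : I + 0 - I = 0 := by omega
      rw [h1, h2]
      simp only [add_zero, Nat.choose_self, Nat.cast_one, pow_zero, sub_self, zpow_zero,
        Nat.choose_zero_right]
      have hfn : (n.factorial : ℝ) ≠ 0 := by exact_mod_cast Nat.factorial_ne_zero n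
      field_simp
    · have hd1 : 1 ≤ d := by omega
      rw [if_neg (by omega)]
      have key := L_inverse_key d (n - 1) hd1
      have hC : ∀ m ∈ Finset.range (d + 1),
          ((if I + m ≤ K then
              h ^ ((I + m : ℕ) - (K : ℤ)) * (K.choose (I + m) : ℝ) *
                (n.factorial : ℝ) / ((n - K + (I + m)).factorial : ℝ)
            else 0) *
           (if I ≤ I + m then
              (-1 : ℝ) ^ (I + m - I) * h ^ ((I : ℤ) - ((I + m : ℕ) : ℤ)) *
                (((I + m).factorial : ℝ) / (I.factorial : ℝ)) *
                ((n + (I + m - I) - 1).choose (I + m - I) : ℝ)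
            else 0)) =
          (h ^ ((I : ℤ) - (K : ℤ)) * (K.factorial : ℝ) * n * ((d - 1).factorial : ℝ) /
              ((I.factorial : ℝ) * (d.factorial : ℝ))) *
            (((-1 : ℤ) ^ m * d.choose m * ((n - 1 + m).choose (d - 1)) : ℤ) : ℝ) := by
        intro m hm
        have hmd : m ≤ d := by simpa [Nat.lt_succ_iff] using hm
        rw [if_pos (by omega), if_pos (by omega), show I + m - I = m from by omega]
        have e1 : (K.choose (I + m) : ℝ) =
            (K.factorial : ℝ) / (((I + m).factorial : ℝ) * ((d - m).factorial : ℝ)) := by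
          rw [Nat.cast_choose ℝ (by omega : I + m ≤ K), show K - (I + m) = d - m from by omega]
        have e2 : ((n + m - 1).choose m : ℝ) =
            ((n - 1 + m).factorial : ℝ) / ((m.factorial : ℝ) * ((n - 1).factorial : ℝ)) := by
          rw [Nat.cast_choose ℝ (by omega : m ≤ n + m - 1),
            show n + m - 1 - m = n - 1 from by omega,
            show n + m - 1 = n - 1 + m from by omega]
        have e3 : (d.choose m : ℝ) =
            (d.factorial : ℝ) / ((m.factorial : ℝ) * ((d - m).factorial : ℝ)) :=
          Nat.cast_choose ℝ hmd
        have e4 : ((n - 1 + m).choose (d - 1) : ℝ) =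
            ((n - 1 + m).factorial : ℝ) /
              (((d - 1).factorial : ℝ) * ((n - K + (I + m)).factorial : ℝ)) := by
          rw [Nat.cast_choose ℝ (by omega : d - 1 ≤ n - 1 + m),
            show n - 1 + m - (d - 1) = n - K + (I + m) from by omega]
        have e5 : (n.factorial : ℝ) = (n : ℝ) * ((n - 1).factorial : ℝ) := by
          have : n.factorial = n * (n - 1).factorial := by
            calc n.factorial = ((n - 1) + 1).factorial := by rw [show n - 1 + 1 = n from by omega]
              _ = ((n - 1) + 1) * (n - 1).factorial := Nat.factorial_succ _
              _ = n * (n - 1).factorial := by rw [show n - 1 + 1 = n from by omega]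
          exact_mod_cast congrArg (Nat.cast : ℕ → ℝ) this
        have e6 : (d.factorial : ℝ) = (d : ℝ) * ((d - 1).factorial : ℝ) := by
          have : d.factorial = d * (d - 1).factorial := by
            calc d.factorial = ((d - 1) + 1).factorial := by rw [show d - 1 + 1 = d from by omega]
              _ = ((d - 1) + 1) * (d - 1).factorial := Nat.factorial_succ _
              _ = d * (d - 1).factorial := by rw [show d - 1 + 1 = d from by omega]
          exact_mod_cast congrArg (Nat.cast : ℕ → ℝ) this
        have eA : h ^ (((I + m : ℕ) : ℤ) - (K : ℤ)) =
            h ^ ((I : ℤ) - (K : ℤ)) * h ^ (m : ℤ) := by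
          rw [← zpow_add₀ hhne]; congr 1; push_cast; ring
        have eB : h ^ ((I : ℤ) - ((I + m : ℕ) : ℤ)) = (h ^ (m : ℤ))⁻¹ := by
          rw [← zpow_neg]; congr 1; push_cast; ring
        have fa : ∀ a : ℕ, ((a.factorial : ℝ)) ≠ 0 :=
          fun a => by exact_mod_cast Nat.factorial_ne_zero a
        have hzm : h ^ (m : ℤ) ≠ 0 := zpow_ne_zero _ hhne
        rw [e1, e2,
          show ((((-1 : ℤ) ^ m * d.choose m * ((n - 1 + m).choose (d - 1)) : ℤ)) : ℝ)
              = (-1 : ℝ) ^ m * (d.choose m : ℝ) * (((n - 1 + m).choose (d - 1)) : ℝ) from by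
            push_cast; ring,
          e3, e4, e5, e6, eA, eB]
        field_simp [fa, hzm]
      rw [Finset.sum_congr rfl hC, ← Finset.mul_sum]
      have : ∑ m ∈ Finset.range (d + 1),
          (((-1 : ℤ) ^ m * d.choose m * ((n - 1 + m).choose (d - 1)) : ℤ) : ℝ) = 0 := by
        rw [← Int.cast_sum]
        exact_mod_cast congrArg (Int.cast : ℤ → ℝ) key
      rw [this, mul_zero]

theorem L_inverse (n : ℕ) (hn : 1 ≤ n) (h : ℝ) (hh : 0 < h) :
    (Matrix.of fun k j : Fin n =>
        if j.1 ≤ k.1 then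
          h ^ ((j.1 : ℤ) - (k.1 : ℤ)) * (k.1.choose j.1 : ℝ) *
            (n.factorial : ℝ) / ((n - k.1 + j.1).factorial : ℝ)
        else 0) *
      (Matrix.of fun j i : Fin n =>
        if i.1 ≤ j.1 then
          (-1 : ℝ) ^ (j.1 - i.1) * h ^ ((i.1 : ℤ) - (j.1 : ℤ)) *
            ((j.1.factorial : ℝ) / (i.1.factorial : ℝ)) *
            ((n + (j.1 - i.1) - 1).choose (j.1 - i.1) : ℝ)
        else 0) = 1 := by
  ext k i
  rw [Matrix.mul_apply]
  simp only [Matrix.of_apply]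
  rw [Fin.sum_univ_eq_sum_range (fun j : ℕ =>
      ((if j ≤ k.1 then
          h ^ ((j : ℤ) - (k.1 : ℤ)) * (k.1.choose j : ℝ) *
            (n.factorial : ℝ) / ((n - k.1 + j).factorial : ℝ)
        else 0) *
       (if i.1 ≤ j then
          (-1 : ℝ) ^ (j - i.1) * h ^ ((i.1 : ℤ) - (j : ℤ)) *
            ((j.factorial : ℝ) / (i.1.factorial : ℝ)) *
            ((n + (j - i.1) - 1).choose (j - i.1) : ℝ)
        else 0))) n]
  rw [L_inverse_aux n hn h hh k.1 i.1 k.isLt]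
  by_cases hki : k = i
  · subst hki; simp [Matrix.one_apply]
  · rw [if_neg (fun hc => hki (Fin.ext hc)), Matrix.one_apply_ne hki]
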